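/- Let u_0 ∈ S_n be defined by u_0(i)=n+1−i for i≤k and u_0(i)=i−k for k<i≤n. Then for every v ∈ S_n, c_{u_0,v}^{id}(t,y) = ∏_{i=1}^{k} ∏_{j=1}^{n−i} (t_i ⊖ y_j) if v = id, and c_{u_0,v}^{id}(t,y) = 0 otherwise. -/

import Mathlib

open MvPolynomial

noncomputable section

namespace BPDPuzzle

/-- `x ⊖ y = (x - y)/(1 + β·y)`. -/
def ominus {K : Type*} [Field K] (β a b : K) : K := (a - b) / (1 + β * b)

/-- A permutation of `ℕ` lying in `S_∞`, i.e. fixing all sufficiently large integers. -/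
def FinPerm (w : Equiv.Perm ℕ) : Prop := ∃ N : ℕ, ∀ j, N ≤ j → w j = j

/-- A permutation of `ℕ` lying in `S_n` (0-based positions `0, …, n-1`). -/
def InSn (n : ℕ) (w : Equiv.Perm ℕ) : Prop := ∀ j, n ≤ j → w j = j

/-- Coxeter length: the number of inversions. -/
def len (w : Equiv.Perm ℕ) : ℕ := Set.ncard {p : ℕ × ℕ | p.1 < p.2 ∧ w p.2 < w p.1}

/-- The simple transposition `s_i`, exchanging the (0-based) positions `i` and `i+1`. -/
def sTr (i : ℕ) : Equiv.Perm ℕ := Equiv.swap i (i + 1)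

/-- `u` and `v` have separated descents at position `k`, i.e.
`maxdes(u) ≤ k ≤ mindes(v)` (in 0-based conventions: `u` has no descent at any
0-based position `≥ k` and `v` has no descent at any 0-based position `< k-1`). -/
def SepDesc (k : ℕ) (u v : Equiv.Perm ℕ) : Prop :=
  (∀ i, k ≤ i → u i ≤ u (i + 1)) ∧ (∀ i, i + 1 < k → v i ≤ v (i + 1))

/-- The longest element `n ⋯ 2 1` of `S_n`, extended by the identity. -/
def revPerm (n : ℕ) : Equiv.Perm ℕ where
  toFun j := if j < n then n - 1 - j else j
  invFun j := if j < n then n - 1 - j else j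
  left_inv j := by dsimp only; split_ifs <;> omega
  right_inv j := by dsimp only; split_ifs <;> omega

/-- Exchange the values of a valuation at the indices `i` and `i+1`. -/
def swapVal {K : Type*} (t : ℕ → K) (i : ℕ) : ℕ → K :=
  fun j => if j = i then t (i + 1) else if j = i + 1 then t i else t j

/-- The defining properties of the family of double Grothendieck polynomials
`𝔊_w(x, t)`, viewed as a family of polynomials in the `x`-variables depending on
a valuation `t` of the second set of variables:  the initial condition
`𝔊_{n⋯21}(x,t) = ∏_{i+j≤n} (x_i ⊖ t_j)` together with the Demazure recursion
`π_i 𝔊_w = 𝔊_{w s_i}` whenever `w(i) > w(i+1)` (the latter written with the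
denominator `x_i - x_{i+1}` cleared). -/
def GrothFamily {K : Type*} [Field K] (β : K)
    (G : (ℕ → K) → Equiv.Perm ℕ → MvPolynomial ℕ K) : Prop :=
  ∀ t : ℕ → K, (∀ j, 1 + β * t j ≠ 0) →
    (∀ n : ℕ, G t (revPerm n) =
      ∏ i ∈ Finset.range n, ∏ j ∈ Finset.range (n - 1 - i),
        C ((1 + β * t j)⁻¹) * (X i - C (t j))) ∧
    (∀ (w : Equiv.Perm ℕ) (i : ℕ), w (i + 1) < w i →
      (X i - X (i + 1)) * G t (w * sTr i) =
        (1 + C β * X (i + 1)) * G t w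
          - (1 + C β * X i) * rename ⇑(Equiv.swap i (i + 1)) (G t w))

/-- The defining property of the structure constants `c_{u,v}^w(t,y)`:
`𝔊_u(x,y) · 𝔊_v(x,t) = Σ_w c_{u,v}^w(t,y) · 𝔊_w(x,t)`, the (finitely supported)
sum ranging over the permutations `w ∈ S_∞`. -/
def StructConsts {K : Type*} [Field K] (β : K)
    (G : (ℕ → K) → Equiv.Perm ℕ → MvPolynomial ℕ K)
    (c : (ℕ → K) → (ℕ → K) → Equiv.Perm ℕ → Equiv.Perm ℕ → Equiv.Perm ℕ → K) : Prop :=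
  ∀ t y : ℕ → K, (∀ j, 1 + β * t j ≠ 0) → (∀ j, 1 + β * y j ≠ 0) →
    ∀ u v : Equiv.Perm ℕ, FinPerm u → FinPerm v →
      {w : Equiv.Perm ℕ | c t y u v w ≠ 0}.Finite ∧
      (∀ w, ¬ FinPerm w → c t y u v w = 0) ∧
      G y u * G t v = ∑ᶠ w : Equiv.Perm ℕ, C (c t y u v w) * G t w

/-! ### The lattice model / pipe puzzles -/

/-- A state of the `n × n` lattice model: labels in `{0, …, n}` on all horizontal
and vertical (half-)edges.  `sst.1 i j` is the `j`-th horizontal (half-)edge of row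
`i` (`j = 0` being the left boundary and `j = n` the right boundary), and
`sst.2 i j` is the `i`-th vertical (half-)edge of column `j` (`i = 0` the top
boundary, `i = n` the bottom boundary). -/
abbrev GridState (n : ℕ) : Type :=
  (Fin n → Fin (n + 1) → Fin (n + 1)) × (Fin (n + 1) → Fin n → Fin (n + 1))

/-- The label on the north edge of the tile in row `i`, column `j`. -/
def labN {n : ℕ} (sst : GridState n) (i j : Fin n) : ℕ := (sst.2 i.castSucc j : ℕ)
/-- The label on the east edge of the tile in row `i`, column `j`. -/
def labE {n : ℕ} (sst : GridState n) (i j : Fin n) : ℕ := (sst.1 i j.succ : ℕ)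
/-- The label on the west edge of the tile in row `i`, column `j`. -/
def labW {n : ℕ} (sst : GridState n) (i j : Fin n) : ℕ := (sst.1 i j.castSucc : ℕ)
/-- The label on the south edge of the tile in row `i`, column `j`. -/
def labS {n : ℕ} (sst : GridState n) (i j : Fin n) : ℕ := (sst.2 i.succ j : ℕ)

/-- Boundary label `κ_u` on the right side (0-based row `i`, 1-based pipe labels). -/
def kappaLab (k : ℕ) (u : Equiv.Perm ℕ) (i : ℕ) : ℕ :=
  if u⁻¹ i < k then u⁻¹ i + 1 else 0

/-- Boundary label `θ_v` on the top side (0-based column `j`, 1-based pipe labels). -/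
def thetaLab (k : ℕ) (v : Equiv.Perm ℕ) (j : ℕ) : ℕ :=
  if k ≤ v⁻¹ j then v⁻¹ j + 1 else 0

/-- Boundary label `η_w` on the bottom side (0-based column `j`, 1-based pipe labels). -/
def etaLab (w : Equiv.Perm ℕ) (j : ℕ) : ℕ := w⁻¹ j + 1

/-- The boundary condition for pipe puzzles for `(u, v, w)`: left edges all `0`,
right edges `κ_u`, top edges `θ_v`, bottom edges `η_w`. -/
def BoundaryCond (n k : ℕ) (u v w : Equiv.Perm ℕ) (sst : GridState n) : Prop :=
  (∀ i : Fin n, (sst.1 i 0 : ℕ) = 0) ∧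
  (∀ i : Fin n, (sst.1 i (Fin.last n) : ℕ) = kappaLab k u (i : ℕ)) ∧
  (∀ j : Fin n, (sst.2 0 j : ℕ) = thetaLab k v (j : ℕ)) ∧
  (∀ j : Fin n, (sst.2 (Fin.last n) j : ℕ) = etaLab w (j : ℕ))

/-- The admissible local configurations (tiles) of a pipe puzzle, in terms of the
four edge labels `N, E, W, S` around a tile:  the empty tile, the vertical pipe,
the horizontal pipe, the crossing (with the horizontal pipe carrying the smaller
label), the two elbows `⌟` and `⌐` (labels `≤ k` coming from the right side,
labels `> k` from the top side), and the bumping tiles (with the stated label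
restrictions). -/
def LAdm (k N E W S : ℕ) : Prop :=
  (N = 0 ∧ E = 0 ∧ W = 0 ∧ S = 0) ∨
  (E = 0 ∧ W = 0 ∧ 0 < N ∧ N = S) ∨
  (N = 0 ∧ S = 0 ∧ 0 < E ∧ E = W) ∨
  (0 < E ∧ E = W ∧ E < N ∧ N = S) ∨
  (E = 0 ∧ S = 0 ∧ 0 < N ∧ N = W ∧ N ≤ k) ∨
  (E = 0 ∧ S = 0 ∧ N = W ∧ k < N) ∨
  (N = 0 ∧ W = 0 ∧ 0 < E ∧ E = S ∧ E ≤ k) ∨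
  (N = 0 ∧ W = 0 ∧ E = S ∧ k < E) ∨
  (0 < E ∧ E = S ∧ E < N ∧ N = W ∧ N ≤ k) ∨
  (k < E ∧ E = S ∧ E < N ∧ N = W) ∨
  (0 < N ∧ N = W ∧ N ≤ k ∧ E = S ∧ k < E)

/-- The admissible local configurations of a Schubert pipe puzzle (no bumping
tiles; crossings have the horizontal pipe carrying the smaller label). -/
def LAdm0 (N E W S : ℕ) : Prop :=
  (N = 0 ∧ E = 0 ∧ W = 0 ∧ S = 0) ∨
  (E = 0 ∧ W = 0 ∧ 0 < N ∧ N = S) ∨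
  (N = 0 ∧ S = 0 ∧ 0 < E ∧ E = W) ∨
  (0 < E ∧ E = W ∧ E < N ∧ N = S) ∨
  (E = 0 ∧ S = 0 ∧ 0 < N ∧ N = W) ∨
  (N = 0 ∧ W = 0 ∧ 0 < E ∧ E = S)

/-- The vertex weight `L(x; N, E, W, S)` of the lattice model (equivalently, the
weight of the corresponding pipe-puzzle tile), with spectral parameter `x`. -/
def Lwt {K : Type*} [Field K] (β : K) (k : ℕ) (x : K) (N E W S : ℕ) : K :=
  if N = 0 ∧ E = 0 ∧ W = 0 ∧ S = 0 then x
  else if E = 0 ∧ W = 0 ∧ 0 < N ∧ N = S then 1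
  else if N = 0 ∧ S = 0 ∧ 0 < E ∧ E = W then 1
  else if 0 < E ∧ E = W ∧ E < N ∧ N = S then 1
  else if E = 0 ∧ S = 0 ∧ 0 < N ∧ N = W ∧ N ≤ k then 1 + β * x
  else if E = 0 ∧ S = 0 ∧ N = W ∧ k < N then 1
  else if N = 0 ∧ W = 0 ∧ 0 < E ∧ E = S ∧ E ≤ k then 1
  else if N = 0 ∧ W = 0 ∧ E = S ∧ k < E then 1 + β * x
  else if 0 < E ∧ E = S ∧ E < N ∧ N = W ∧ N ≤ k then β
  else if k < E ∧ E = S ∧ E < N ∧ N = W then β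
  else if 0 < N ∧ N = W ∧ N ≤ k ∧ E = S ∧ k < E then β * (1 + β * x)
  else 0

/-- The set of pipe puzzles for `(u, v, w)` (with separated-descent parameter `k`),
encoded as admissible states of the lattice model. -/
def PP (n k : ℕ) (u v w : Equiv.Perm ℕ) : Set (GridState n) :=
  {sst | BoundaryCond n k u v w sst ∧
    ∀ i j : Fin n, LAdm k (labN sst i j) (labE sst i j) (labW sst i j) (labS sst i j)}

/-- The set of Schubert pipe puzzles for `(u, v, w)`. -/
def PP0 (n k : ℕ) (u v w : Equiv.Perm ℕ) : Set (GridState n) :=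
  {sst | BoundaryCond n k u v w sst ∧
    ∀ i j : Fin n, LAdm0 (labN sst i j) (labE sst i j) (labW sst i j) (labS sst i j)}

/-- The weight `wt(π)` of a pipe puzzle: the product over all tiles, the tile in
row `i` and column `j` having spectral parameter `t_j ⊖ y_i`. -/
def stateWt {K : Type*} [Field K] (β : K) (k : ℕ) (t y : ℕ → K) {n : ℕ}
    (sst : GridState n) : K :=
  ∏ i : Fin n, ∏ j : Fin n,
    Lwt β k (ominus β (t (j : ℕ)) (y (i : ℕ)))
      (labN sst i j) (labE sst i j) (labW sst i j) (labS sst i j)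

/-- The Schubert weight `wt₀(π)`: the product of `t_j - y_i` over the positions
`(i, j)` of the empty tiles. -/
def stateWt0 {K : Type*} [Field K] (t y : ℕ → K) {n : ℕ} (sst : GridState n) : K :=
  ∏ i : Fin n, ∏ j : Fin n,
    if labN sst i j = 0 ∧ labE sst i j = 0 ∧ labW sst i j = 0 ∧ labS sst i j = 0
    then t (j : ℕ) - y (i : ℕ) else 1

/-! ### Part 1: permutation basics and the Ehresmann order -/

lemma revPerm_apply (n j : ℕ) : revPerm n j = if j < n then n - 1 - j else j := rfl

lemma sTr_apply (i j : ℕ) : sTr i j = if j = i then i + 1 else if j = i + 1 then i else j := by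
  simp [sTr, Equiv.swap_apply_def]

lemma sTr_mul_self (i : ℕ) : sTr i * sTr i = 1 := Equiv.swap_mul_self _ _

lemma mul_sTr_left (w : Equiv.Perm ℕ) (i : ℕ) : (w * sTr i) i = w (i + 1) := by
  simp [Equiv.Perm.mul_apply, sTr_apply]

lemma mul_sTr_right (w : Equiv.Perm ℕ) (i : ℕ) : (w * sTr i) (i + 1) = w i := by
  simp [Equiv.Perm.mul_apply, sTr_apply]

lemma mul_sTr_ne (w : Equiv.Perm ℕ) (i a : ℕ) (h1 : a ≠ i) (h2 : a ≠ i + 1) :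
    (w * sTr i) a = w a := by
  rw [Equiv.Perm.mul_apply, sTr_apply]
  simp [h1, h2]

lemma mul_sTr_sTr (w : Equiv.Perm ℕ) (i : ℕ) : (w * sTr i) * sTr i = w := by
  rw [mul_assoc, sTr_mul_self, mul_one]

/-- Counting function for the Ehresmann (Bruhat) order. -/
def cnt (w : Equiv.Perm ℕ) (i j : ℕ) : ℕ :=
  ((Finset.range i).filter (fun a => j ≤ w a)).card

/-- The Ehresmann characterization of the Bruhat order on `S_∞`. -/
def ele (w σ : Equiv.Perm ℕ) : Prop := ∀ i j, cnt w i j ≤ cnt σ i j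

lemma ele_trans {w v σ : Equiv.Perm ℕ} (h1 : ele w v) (h2 : ele v σ) : ele w σ :=
  fun i j => le_trans (h1 i j) (h2 i j)

lemma cnt_succ (w : Equiv.Perm ℕ) (i j : ℕ) :
    cnt w (i + 1) j = cnt w i j + (if j ≤ w i then 1 else 0) := by
  unfold cnt
  rw [Finset.range_add_one, Finset.filter_insert]
  split_ifs with h
  · rw [Finset.card_insert_of_notMem (by simp)]
  · simp

lemma cnt_congr {w v : Equiv.Perm ℕ} (i j : ℕ) (h : ∀ a, a < i → w a = v a) :
    cnt w i j = cnt v i j := by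
  unfold cnt
  congr 1
  apply Finset.filter_congr
  intro a ha
  rw [h a (Finset.mem_range.mp ha)]

lemma cnt_le (w : Equiv.Perm ℕ) (i j : ℕ) : cnt w i j ≤ i := by
  calc cnt w i j ≤ (Finset.range i).card := Finset.card_filter_le _ _
  _ = i := Finset.card_range i

lemma cnt_filter_neg (w : Equiv.Perm ℕ) (i j : ℕ) :
    cnt w i j + ((Finset.range i).filter (fun a => ¬ j ≤ w a)).card = i := by
  unfold cnt
  rw [Finset.card_filter_add_card_filter_not]
  · exact Finset.card_range i

lemma filter_neg_le (w : Equiv.Perm ℕ) (i j : ℕ) :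
    ((Finset.range i).filter (fun a => ¬ j ≤ w a)).card ≤ j := by
  have : ((Finset.range i).filter (fun a => ¬ j ≤ w a)).card ≤ (Finset.range j).card := by
    apply Finset.card_le_card_of_injOn w
    · intro a ha
      simp only [Finset.mem_coe, Finset.mem_filter, Finset.mem_range, not_le] at ha ⊢
      exact ha.2
    · intro a _ b _ hab
      exact w.injective hab
  simpa using this

lemma cnt_lower (w : Equiv.Perm ℕ) (i j : ℕ) : i ≤ cnt w i j + j := by
  have h1 := cnt_filter_neg w i j
  have h2 := filter_neg_le w i j
  omega

/-- If `w` has a descent at `i` then `w·sᵢ ≤ w` in Bruhat order. -/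
lemma ele_mul_sTr (v : Equiv.Perm ℕ) (i : ℕ) (hd : v (i + 1) < v i) : ele (v * sTr i) v := by
  intro i' j
  rcases le_or_gt i' i with h | h
  · exact le_of_eq (cnt_congr i' j fun a ha => mul_sTr_ne v i a (by omega) (by omega))
  rcases le_or_gt (i + 2) i' with h2 | h2
  swap
  · -- i' = i + 1
    have hi' : i' = i + 1 := by omega
    subst hi'
    rw [cnt_succ, cnt_succ, mul_sTr_left,
      cnt_congr i j fun a ha => mul_sTr_ne v i a (by omega) (by omega)]
    split_ifs <;> omega
  · -- i' ≥ i + 2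
    have base : cnt (v * sTr i) (i + 2) j = cnt v (i + 2) j := by
      rw [show i + 2 = (i + 1) + 1 from rfl, cnt_succ, cnt_succ, cnt_succ, cnt_succ,
        mul_sTr_left, mul_sTr_right,
        cnt_congr i j fun a ha => mul_sTr_ne v i a (by omega) (by omega)]
      split_ifs <;> omega
    have tail : ∀ d, cnt (v * sTr i) (i + 2 + d) j = cnt v (i + 2 + d) j := by
      intro d
      induction d with
      | zero => exact base
      | succ d ih =>
        rw [show i + 2 + (d + 1) = (i + 2 + d) + 1 by omega, cnt_succ, cnt_succ, ih,
          mul_sTr_ne v i (i + 2 + d) (by omega) (by omega)]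
    have := tail (i' - i - 2)
    rw [show i + 2 + (i' - i - 2) = i' by omega] at this
    exact le_of_eq this

lemma cnt_mul_sTr_eq (w : Equiv.Perm ℕ) (i i' j : ℕ) (h : i' ≤ i ∨ i + 2 ≤ i') :
    cnt (w * sTr i) i' j = cnt w i' j := by
  rcases h with h | h
  · exact cnt_congr i' j fun a ha => mul_sTr_ne w i a (by omega) (by omega)
  · have base : cnt (w * sTr i) (i + 2) j = cnt w (i + 2) j := by
      rw [show i + 2 = (i + 1) + 1 from rfl, cnt_succ, cnt_succ, cnt_succ, cnt_succ,
        mul_sTr_left, mul_sTr_right,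
        cnt_congr i j fun a ha => mul_sTr_ne w i a (by omega) (by omega)]
      split_ifs <;> omega
    have tail : ∀ d, cnt (w * sTr i) (i + 2 + d) j = cnt w (i + 2 + d) j := by
      intro d
      induction d with
      | zero => exact base
      | succ d ih =>
        rw [show i + 2 + (d + 1) = (i + 2 + d) + 1 by omega, cnt_succ, cnt_succ, ih,
          mul_sTr_ne w i (i + 2 + d) (by omega) (by omega)]
    have := tail (i' - i - 2)
    rw [show i + 2 + (i' - i - 2) = i' by omega] at this
    exact this

/-- The key "lifting" property. -/
lemma ele_cross (v σ : Equiv.Perm ℕ) (i : ℕ) (hd : v (i + 1) < v i)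
    (h : ele v (σ * sTr i)) : ele (v * sTr i) σ := by
  intro i' j
  rcases le_or_gt i' i with hle | hgt
  · rw [cnt_mul_sTr_eq v i i' j (Or.inl hle)]
    have := h i' j
    rw [cnt_mul_sTr_eq σ i i' j (Or.inl hle)] at this
    exact this
  rcases le_or_gt (i + 2) i' with h2 | h2
  · rw [cnt_mul_sTr_eq v i i' j (Or.inr h2)]
    have := h i' j
    rw [cnt_mul_sTr_eq σ i i' j (Or.inr h2)] at this
    exact this
  · have hi' : i' = i + 1 := by omega
    subst hi'
    have e0 : cnt (σ * sTr i) i j = cnt σ i j := cnt_mul_sTr_eq σ i i j (Or.inl le_rfl)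
    have h1 := h i j
    rw [e0] at h1
    have h2' := h (i + 1) j
    rw [cnt_succ, cnt_succ, e0, mul_sTr_left] at h2'
    have h3 := h (i + 2) j
    rw [show i + 2 = (i + 1) + 1 from rfl, cnt_succ, cnt_succ, cnt_succ, cnt_succ, e0,
      mul_sTr_left, mul_sTr_right] at h3
    rw [cnt_succ, cnt_succ, mul_sTr_left,
      cnt_mul_sTr_eq v i i j (Or.inl le_rfl)]
    split_ifs at h2' h3 ⊢ <;> omega

/-- Only the identity is Bruhat-below the identity. -/
lemma eq_one_of_ele_one (w : Equiv.Perm ℕ) (h : ele w 1) : w = 1 := by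
  by_contra hne
  have hex : ∃ i, w i ≠ i := by
    by_contra h'
    push_neg at h'
    exact hne (Equiv.ext h')
  classical
  obtain ⟨i, hi, hmin⟩ : ∃ i, w i ≠ i ∧ ∀ a, a < i → w a = a := by
    exact ⟨Nat.find hex, Nat.find_spec hex, fun a ha => not_not.mp (Nat.find_min hex ha)⟩
  have hwi : i < w i := by
    rcases lt_trichotomy (w i) i with hlt | heq | hgt
    · exfalso
      have := hmin (w i) hlt
      exact hi (w.injective this)
    · exact absurd heq hi
    · exact hgt
  have hc1 : 1 ≤ cnt w (i + 1) (i + 1) := by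
    have : i ∈ (Finset.range (i + 1)).filter (fun a => i + 1 ≤ w a) := by
      simp only [Finset.mem_filter, Finset.mem_range]
      omega
    have := Finset.card_pos.mpr ⟨i, this⟩
    exact this
  have hc2 : cnt 1 (i + 1) (i + 1) = 0 := by
    unfold cnt
    rw [Finset.card_eq_zero, Finset.filter_eq_empty_iff]
    intro a ha
    simp only [Equiv.Perm.one_apply, not_le]
    exact Finset.mem_range.mp ha
  have := h (i + 1) (i + 1)
  omega

/-- The base case of the vanishing: anything not above `revPerm n` misses the staircase. -/
lemma ele_revPerm (n : ℕ) (σ : Equiv.Perm ℕ) (hσ : ∀ i, i < n → n - 1 - i ≤ σ i) :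
    ele (revPerm n) σ := by
  intro i j
  rcases le_or_gt i n with hin | hin
  · have hfil : (Finset.range i).filter (fun a => j ≤ revPerm n a) =
        Finset.range (min i (n - j)) := by
      ext a
      rw [Finset.mem_filter]
      simp only [Finset.mem_filter, Finset.mem_range, revPerm_apply, lt_min_iff]
      constructor
      · rintro ⟨ha, hj⟩
        rw [if_pos (by omega)] at hj
        omega
      · rintro ⟨ha, hj⟩
        rw [if_pos (by omega)]
        omega
    have h2 : Finset.range (min i (n - j)) ⊆
        (Finset.range i).filter (fun a => j ≤ σ a) := by
      intro a ha
      simp only [Finset.mem_range, lt_min_iff] at ha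
      simp only [Finset.mem_filter, Finset.mem_range]
      refine ⟨ha.1, ?_⟩
      have := hσ a (by omega)
      omega
    unfold cnt
    rw [hfil, Finset.card_range]
    calc min i (n - j) = (Finset.range (min i (n - j))).card := (Finset.card_range _).symm
    _ ≤ _ := Finset.card_le_card h2
  · -- n < i : the revPerm count is at most i - min i j which is a lower bound for any perm
    have key1 : min i j ≤ ((Finset.range i).filter (fun a => ¬ j ≤ revPerm n a)).card := by
      have : Finset.range (min i j) ⊆
          Finset.image (fun x => revPerm n x) ((Finset.range i).filter
            (fun a => ¬ j ≤ revPerm n a)) := by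
        intro x hx
        simp only [Finset.mem_range, lt_min_iff] at hx
        simp only [Finset.mem_image, Finset.mem_filter, Finset.mem_range]
        refine ⟨revPerm n x, ⟨?_, ?_⟩, ?_⟩
        · rw [revPerm_apply]
          split_ifs <;> omega
        · rw [show revPerm n (revPerm n x) = x from (revPerm n).left_inv x]
          omega
        · exact (revPerm n).left_inv x
      calc min i j = (Finset.range (min i j)).card := (Finset.card_range _).symm
      _ ≤ _ := Finset.card_le_card this
      _ ≤ _ := Finset.card_image_le
    have key2 := cnt_filter_neg (revPerm n) i j
    have key3 := cnt_lower σ i j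
    have key4 := cnt_le σ i j
    omega
/-! ### Part 2: divisibility by `X i - X (i+1)` -/

section Div

variable {R : Type*} [CommRing R]

/-- The substitution collapsing `X i` to `X (i+1)`. -/
def colMap (R : Type*) [CommRing R] (i : ℕ) : MvPolynomial ℕ R →ₐ[R] MvPolynomial ℕ R :=
  aeval (fun a => if a = i then X (i + 1) else X a)

lemma dvd_sub_colMap (i : ℕ) (P : MvPolynomial ℕ R) :
    (X i - X (i + 1)) ∣ (P - colMap R i P) := by
  induction P using MvPolynomial.induction_on with
  | C a => simp [colMap]
  | add p q hp hq =>
    rw [map_add]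
    have : p + q - (colMap R i p + colMap R i q) = (p - colMap R i p) + (q - colMap R i q) := by
      ring
    rw [this]
    exact dvd_add hp hq
  | mul_X p j hp =>
    rw [map_mul]
    have hXj : colMap R i (X j) = if j = i then X (i + 1) else X j := by
      simp [colMap]
    by_cases hj : j = i
    · rw [hXj, if_pos hj, hj]
      have : p * X i - colMap R i p * X (i + 1) =
          (p - colMap R i p) * X i + colMap R i p * (X i - X (i + 1)) := by ring
      rw [this]
      exact dvd_add (hp.mul_right _) (Dvd.intro_left _ rfl)
    · rw [hXj, if_neg hj]
      have : p * X j - colMap R i p * X j = (p - colMap R i p) * X j := by ring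
      rw [this]
      exact hp.mul_right _

lemma exists_quotient (i : ℕ) (P : MvPolynomial ℕ R) (h : colMap R i P = 0) :
    ∃ Q, P = (X i - X (i + 1)) * Q := by
  have := dvd_sub_colMap i P
  rw [h, sub_zero] at this
  obtain ⟨Q, hQ⟩ := this
  exact ⟨Q, hQ⟩

lemma X_sub_X_ne_zero [Nontrivial R] (a b : ℕ) (h : a ≠ b) :
    (X a - X b : MvPolynomial ℕ R) ≠ 0 := by
  intro heq
  have := congrArg (eval (fun x => if x = a then (1 : R) else 0)) heq
  rw [map_sub, eval_X, eval_X, map_zero, if_pos rfl, if_neg (Ne.symm h)] at this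
  simp at this

end Div
/-! ### Part 3: ascents and counting non-inversions -/

/-- The number of non-inversions (ascending pairs) of `w` within `[0, n)`. -/
def ninv (n : ℕ) (w : Equiv.Perm ℕ) : ℕ :=
  ((Finset.range n ×ˢ Finset.range n).filter (fun p => p.1 < p.2 ∧ w p.1 < w p.2)).card

lemma inSn_lt {n : ℕ} {w : Equiv.Perm ℕ} (hw : InSn n w) {a : ℕ} (ha : a < n) : w a < n := by
  by_contra h
  have h1 : w (w a) = w a := hw (w a) (by omega)
  have h2 : w a = a := w.injective h1
  omega

lemma inSn_mul_sTr {n : ℕ} {w : Equiv.Perm ℕ} (hw : InSn n w) {i : ℕ} (hi : i + 1 < n) :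
    InSn n (w * sTr i) := by
  intro j hj
  rw [mul_sTr_ne w i j (by omega) (by omega)]
  exact hw j hj

lemma eq_revPerm_of_all_descents {n : ℕ} {w : Equiv.Perm ℕ} (hw : InSn n w)
    (hall : ∀ i, i + 1 < n → w (i + 1) < w i) : w = revPerm n := by
  have upper : ∀ a, a < n → w a + a ≤ n - 1 := by
    intro a
    induction a with
    | zero =>
      intro ha
      have := inSn_lt hw ha
      omega
    | succ a ih =>
      intro ha
      have h1 := ih (by omega)
      have h2 := hall a ha
      omega
  have lower : ∀ d a, a + d + 1 = n → n - 1 - a ≤ w a := by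
    intro d
    induction d with
    | zero =>
      intro a ha
      omega
    | succ d ih =>
      intro a ha
      have h1 := ih (a + 1) (by omega)
      have h2 := hall a (by omega)
      omega
  apply Equiv.ext
  intro j
  rw [revPerm_apply]
  split_ifs with hj
  · have := upper j hj
    have := lower (n - 1 - j) j (by omega)
    omega
  · exact hw j (by omega)

lemma exists_ascent {n : ℕ} {w : Equiv.Perm ℕ} (hw : InSn n w) (hne : w ≠ revPerm n) :
    ∃ i, i + 1 < n ∧ w i < w (i + 1) := by
  by_contra h
  push_neg at h
  apply hne
  apply eq_revPerm_of_all_descents hw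
  intro i hi
  have h1 := h i hi
  have h2 : w (i + 1) ≠ w i := fun hc => by
    have := w.injective hc
    omega
  omega

lemma ninv_step {n : ℕ} (w : Equiv.Perm ℕ) {i : ℕ} (hi : i + 1 < n) (hasc : w i < w (i + 1)) :
    ninv n w = ninv n (w * sTr i) + 1 := by
  classical
  set F := (Finset.range n ×ˢ Finset.range n).filter
    (fun p => p.1 < p.2 ∧ w p.1 < w p.2) with hF
  set Fv := (Finset.range n ×ˢ Finset.range n).filter
    (fun p => p.1 < p.2 ∧ (w * sTr i) p.1 < (w * sTr i) p.2) with hFv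
  have happ : ∀ a, (w * sTr i) a = w (sTr i a) := fun a => rfl
  have hmem : (i, i + 1) ∈ F := by
    simp only [hF, Finset.mem_filter, Finset.mem_product, Finset.mem_range]
    exact ⟨⟨by omega, hi⟩, by omega, hasc⟩
  have hcard : Fv.card = (F.erase (i, i + 1)).card := by
    apply Finset.card_nbij' (fun p => (sTr i p.1, sTr i p.2)) (fun q => (sTr i q.1, sTr i q.2))
    · -- forward map
      rintro ⟨a, b⟩ hab
      simp only [Finset.mem_coe, hFv, Finset.mem_filter, Finset.mem_product, Finset.mem_range] at hab
      obtain ⟨⟨han, hbn⟩, hab1, hab2⟩ := hab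
      rw [happ, happ] at hab2
      have hne' : ¬ (a = i ∧ b = i + 1) := by
        rintro ⟨rfl, rfl⟩
        have e1 : sTr a a = a + 1 := by rw [sTr_apply]; split_ifs <;> omega
        have e2 : sTr a (a + 1) = a := by rw [sTr_apply]; split_ifs <;> omega
        rw [e1, e2] at hab2
        omega
      rw [Finset.mem_coe, Finset.mem_erase]
      constructor
      · intro hc
        rw [Prod.mk.injEq] at hc
        obtain ⟨hc1, hc2⟩ := hc
        rw [sTr_apply] at hc1 hc2
        split_ifs at hc1 hc2 <;> omega
      · simp only [hF, Finset.mem_filter, Finset.mem_product, Finset.mem_range]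
        rw [sTr_apply, sTr_apply]
        refine ⟨⟨?_, ?_⟩, ?_, ?_⟩
        · split_ifs <;> omega
        · split_ifs <;> omega
        · split_ifs <;> omega
        · convert hab2 using 2 <;> rw [sTr_apply]
    · -- backward map
      rintro ⟨a, b⟩ hab
      rw [Finset.mem_coe, Finset.mem_erase] at hab
      obtain ⟨hne', hab⟩ := hab
      simp only [hF, Finset.mem_filter, Finset.mem_product, Finset.mem_range] at hab
      obtain ⟨⟨han, hbn⟩, hab1, hab2⟩ := hab
      have hne'' : ¬ (a = i ∧ b = i + 1) := by
        rintro ⟨rfl, rfl⟩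
        exact hne' rfl
      simp only [Finset.mem_coe, hFv, Finset.mem_filter, Finset.mem_product, Finset.mem_range]
      rw [happ, happ, sTr_apply, sTr_apply]
      have key : ∀ x, sTr i (sTr i x) = x := fun x => by
        rw [sTr_apply, sTr_apply]
        split_ifs <;> omega
      refine ⟨⟨?_, ?_⟩, ?_, ?_⟩
      · split_ifs <;> omega
      · split_ifs <;> omega
      · split_ifs <;> omega
      · rw [show sTr i (if a = i then i + 1 else if a = i + 1 then i else a) = a by
          rw [← sTr_apply]; exact key a,
          show sTr i (if b = i then i + 1 else if b = i + 1 then i else b) = b by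
          rw [← sTr_apply]; exact key b]
        exact hab2
    · rintro ⟨a, b⟩ _
      have key : ∀ x, sTr i (sTr i x) = x := fun x => by
        rw [sTr_apply, sTr_apply]
        split_ifs <;> omega
      simp [key]
    · rintro ⟨a, b⟩ _
      have key : ∀ x, sTr i (sTr i x) = x := fun x => by
        rw [sTr_apply, sTr_apply]
        split_ifs <;> omega
      simp [key]
  have : F.card = (F.erase (i, i + 1)).card + 1 := by
    rw [Finset.card_erase_of_mem hmem]
    have : 0 < F.card := Finset.card_pos.mpr ⟨_, hmem⟩
    omega
  unfold ninv
  rw [← hF, ← hFv, this, hcard]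
/-! ### Part 4: the vanishing `𝔊_w(t,t) = 0` for `w ≠ 1` -/

section Vanish

variable {K : Type*} [Field K] (β : K) (G : (ℕ → K) → Equiv.Perm ℕ → MvPolynomial ℕ K)

lemma key_induction (hG : GrothFamily β G) (t : ℕ → K) (ht : ∀ j, 1 + β * t j ≠ 0) (n : ℕ) :
    ∀ m (w : Equiv.Perm ℕ), InSn n w → ninv n w = m →
      ∃ h : MvPolynomial ℕ (MvPolynomial ℕ K),
        C (∏ i ∈ Finset.range n, ∏ j ∈ Finset.range (n - 1 - i), (1 + β * t j)) * G t w
          = MvPolynomial.map (eval t) h ∧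
        ∀ σ : Equiv.Perm ℕ, ¬ ele w σ →
          eval (fun a => (X (σ a) : MvPolynomial ℕ K)) h = 0 := by
  intro m
  induction m using Nat.strong_induction_on with
  | _ m IH =>
  intro w hw hm
  by_cases hrev : w = revPerm n
  · -- base case : the staircase
    subst hrev
    refine ⟨∏ i ∈ Finset.range n, ∏ j ∈ Finset.range (n - 1 - i),
      (X i - C (X j)), ?_, ?_⟩
    · have hC : (C (∏ i ∈ Finset.range n, ∏ j ∈ Finset.range (n - 1 - i), (1 + β * t j))
          : MvPolynomial ℕ K)
          = ∏ i ∈ Finset.range n, ∏ j ∈ Finset.range (n - 1 - i), C (1 + β * t j) := by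
        rw [map_prod]
        exact Finset.prod_congr rfl fun i _ => map_prod _ _ _
      rw [(hG t ht).1 n, hC, ← Finset.prod_mul_distrib, map_prod]
      refine Finset.prod_congr rfl fun i _ => ?_
      rw [map_prod, ← Finset.prod_mul_distrib]
      refine Finset.prod_congr rfl fun j _ => ?_
      rw [map_sub, MvPolynomial.map_X, MvPolynomial.map_C, eval_X, ← mul_assoc, ← C_mul,
        mul_inv_cancel₀ (ht j), C_1, one_mul]
    · intro σ hns
      have hcontra : ¬ ∀ i, i < n → n - 1 - i ≤ σ i := fun hc => hns (ele_revPerm n σ hc)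
      push_neg at hcontra
      obtain ⟨i, hi, hσ⟩ := hcontra
      rw [map_prod]
      apply Finset.prod_eq_zero (Finset.mem_range.mpr hi)
      rw [map_prod]
      apply Finset.prod_eq_zero (Finset.mem_range.mpr hσ)
      rw [map_sub, eval_X, eval_C, sub_self]
  · -- inductive step
    obtain ⟨i, hi, hasc⟩ := exists_ascent hw hrev
    set v := w * sTr i with hvdef
    have hdesc : v (i + 1) < v i := by
      rw [hvdef, mul_sTr_left, mul_sTr_right]
      exact hasc
    have hvw : v * sTr i = w := mul_sTr_sTr w i
    have hninv : ninv n w = ninv n v + 1 := ninv_step w hi hasc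
    have hm1 : ninv n v = m - 1 := by omega
    have hm2 : m - 1 < m := by omega
    obtain ⟨hv, hva, hvb⟩ := IH (m - 1) hm2 v (inSn_mul_sTr hw hi) hm1
    set sw : ℕ → ℕ := ⇑(Equiv.swap i (i + 1)) with hswdef
    set NA : MvPolynomial ℕ (MvPolynomial ℕ K) :=
      (1 + C (C β) * X (i + 1)) * hv - (1 + C (C β) * X i) * rename sw hv with hNAdef
    have hcol : colMap (MvPolynomial ℕ K) i NA = 0 := by
      rw [hNAdef]
      unfold colMap
      rw [map_sub, map_mul, map_mul, aeval_rename]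
      have hfun : ((fun a => if a = i then (X (i + 1) :
            MvPolynomial ℕ (MvPolynomial ℕ K)) else X a) ∘ sw)
          = (fun a => if a = i then (X (i + 1) :
            MvPolynomial ℕ (MvPolynomial ℕ K)) else X a) := by
        funext a
        simp only [Function.comp_apply, hswdef, Equiv.swap_apply_def]
        split_ifs <;> first | rfl | (exfalso; omega) | (congr 1; omega)
      rw [hfun]
      simp only [map_add, map_mul, map_one, aeval_X, aeval_C, eq_self_iff_true, if_true,
        Nat.succ_ne_self, if_false, ite_true, ite_false, ite_self]
      ring
    obtain ⟨hw', hquot⟩ := exists_quotient i NA hcol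
    refine ⟨hw', ?_, ?_⟩
    · -- the transfer identity
      have hrec := (hG t ht).2 v i hdesc
      rw [hvw] at hrec
      have hmapNA : MvPolynomial.map (eval t) NA
          = (1 + C β * X (i + 1)) * MvPolynomial.map (eval t) hv
            - (1 + C β * X i) * rename sw (MvPolynomial.map (eval t) hv) := by
        rw [hNAdef]
        simp only [map_sub, map_mul, map_add, map_one, MvPolynomial.map_X, MvPolynomial.map_C,
          map_rename, eval_C]
      apply mul_left_cancel₀ (X_sub_X_ne_zero (R := K) i (i + 1) (by omega))
      calc (X i - X (i + 1)) *
            (C (∏ i ∈ Finset.range n, ∏ j ∈ Finset.range (n - 1 - i), (1 + β * t j)) * G t w)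
          = C (∏ i ∈ Finset.range n, ∏ j ∈ Finset.range (n - 1 - i), (1 + β * t j)) *
            ((X i - X (i + 1)) * G t w) := by ring
        _ = C (∏ i ∈ Finset.range n, ∏ j ∈ Finset.range (n - 1 - i), (1 + β * t j)) *
            ((1 + C β * X (i + 1)) * G t v - (1 + C β * X i) * rename sw (G t v)) := by
            rw [hrec]
        _ = (1 + C β * X (i + 1)) *
              (C (∏ i ∈ Finset.range n, ∏ j ∈ Finset.range (n - 1 - i), (1 + β * t j)) * G t v)
            - (1 + C β * X i) *
              rename sw (C (∏ i ∈ Finset.range n, ∏ j ∈ Finset.range (n - 1 - i),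
                (1 + β * t j)) * G t v) := by
            rw [map_mul, rename_C]
            ring
        _ = (1 + C β * X (i + 1)) * MvPolynomial.map (eval t) hv
            - (1 + C β * X i) * rename sw (MvPolynomial.map (eval t) hv) := by rw [hva]
        _ = MvPolynomial.map (eval t) NA := hmapNA.symm
        _ = (X i - X (i + 1)) * MvPolynomial.map (eval t) hw' := by
            rw [hquot, map_mul, map_sub, MvPolynomial.map_X, MvPolynomial.map_X]
    · -- the vanishing
      intro σ hns
      have h1 : ¬ ele v σ := by
        intro hcon
        apply hns
        have := ele_mul_sTr v i hdesc
        rw [hvw] at this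
        exact ele_trans this hcon
      have h2 : ¬ ele v (σ * sTr i) := by
        intro hcon
        apply hns
        have := ele_cross v σ i hdesc hcon
        rwa [hvw] at this
      have happ := congrArg (eval (fun a => (X (σ a) : MvPolynomial ℕ K))) hquot
      rw [hNAdef] at happ
      simp only [map_sub, map_mul, map_add, map_one, eval_X, eval_C] at happ
      have hren : eval (fun a => (X (σ a) : MvPolynomial ℕ K)) (rename sw hv)
          = eval (fun a => (X ((σ * sTr i) a) : MvPolynomial ℕ K)) hv := by
        rw [eval_rename]
        rfl
      rw [hren, hvb σ h1, hvb (σ * sTr i) h2, mul_zero, mul_zero, sub_zero] at happ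
      rcases mul_eq_zero.mp happ.symm with hzero | hzero
      · exfalso
        exact X_sub_X_ne_zero (R := K) (σ i) (σ (i + 1))
          (fun hc => by have := σ.injective hc; omega) hzero
      · exact hzero

lemma G_one (hG : GrothFamily β G) (t : ℕ → K) (ht : ∀ j, 1 + β * t j ≠ 0) : G t 1 = 1 := by
  have h := (hG t ht).1 0
  have h0 : revPerm 0 = 1 := by
    apply Equiv.ext
    intro j
    rw [revPerm_apply, if_neg (Nat.not_lt_zero j)]
    rfl
  rw [h0] at h
  simpa using h

lemma eval_vanish (hG : GrothFamily β G) (t : ℕ → K) (ht : ∀ j, 1 + β * t j ≠ 0)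
    (n : ℕ) (w : Equiv.Perm ℕ) (hw : InSn n w) (hne : w ≠ 1) :
    eval t (G t w) = 0 := by
  obtain ⟨h, ha, hb⟩ := key_induction β G hG t ht n (ninv n w) w hw rfl
  have hd : (∏ i ∈ Finset.range n, ∏ j ∈ Finset.range (n - 1 - i), (1 + β * t j)) ≠ 0 := by
    rw [Finset.prod_ne_zero_iff]
    intro i _
    rw [Finset.prod_ne_zero_iff]
    intro j _
    exact ht j
  have h0 : eval (fun a => (X (((1 : Equiv.Perm ℕ)) a) : MvPolynomial ℕ K)) h = 0 :=
    hb 1 (fun hc => hne (eq_one_of_ele_one w hc))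
  have key : (∏ i ∈ Finset.range n, ∏ j ∈ Finset.range (n - 1 - i), (1 + β * t j))
      * eval t (G t w) = 0 := by
    have e1 : eval t (C (∏ i ∈ Finset.range n, ∏ j ∈ Finset.range (n - 1 - i), (1 + β * t j))
        * G t w) = eval t (MvPolynomial.map (eval t) h) := by rw [ha]
    rw [map_mul, eval_C] at e1
    rw [e1, eval_map]
    have e2 : eval t (eval (fun a => (X (((1 : Equiv.Perm ℕ)) a) : MvPolynomial ℕ K)) h)
        = eval₂ (eval t) t h := by
      have e3 := eval₂_comp_left (eval t) (RingHom.id (MvPolynomial ℕ K))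
        (fun a => (X (((1 : Equiv.Perm ℕ)) a) : MvPolynomial ℕ K)) h
      rw [eval₂_id] at e3
      rw [e3]
      congr 1
      · funext a
        simp
    rw [← e2, h0, map_zero]
  rcases mul_eq_zero.mp key with h' | h'
  · exact absurd h' hd
  · exact h'

end Vanish
/-! ### Part 5: the explicit formula for `𝔊_{u₀}` -/

/-- The elementary factor `x_i ⊖ y_j` as a polynomial. -/
def fpol {K : Type*} [Field K] (β : K) (y : ℕ → K) (i j : ℕ) : MvPolynomial ℕ K :=
  C ((1 + β * y j)⁻¹) * (X i - C (y j))

/-- The shape of the intermediate dominant permutation at stage `(p, r)`. -/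
def shpF (n k p r i : ℕ) : ℕ :=
  if i < k then n - 1 - i
  else if i < n then (n - k - 1 - p - (i - k)) - (if i - k < r then 1 else 0)
  else 0

/-- The intermediate dominant permutation at stage `(p, r)` (as a function). -/
def pfF (n k p r j : ℕ) : ℕ :=
  if j < k then n - 1 - j
  else if j < n then
    (if j - k < r then n - k - 1 - p - 1 - (j - k)
     else if j - k = r then n - k - 1 - p
     else if j - k ≤ n - k - 1 - p then n - k - 1 - p - (j - k)
     else j - k)
  else j

/-- The dominant Grothendieck polynomial of shape `(p, r)`. -/
def Qpol {K : Type*} [Field K] (β : K) (y : ℕ → K) (n k p r : ℕ) : MvPolynomial ℕ K :=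
  ∏ i ∈ Finset.range n, ∏ j ∈ Finset.range (shpF n k p r i), fpol β y i j

section ChainLemmas

variable {K : Type*} [Field K]

lemma rename_swap_Q (β : K) (y : ℕ → K) (n : ℕ) (L : ℕ → ℕ) (i0 : ℕ)
    (hin : i0 + 1 < n) (hL : L i0 = L (i0 + 1)) :
    rename (⇑(Equiv.swap i0 (i0 + 1)))
        (∏ a ∈ Finset.range n, ∏ b ∈ Finset.range (L a), fpol β y a b)
      = ∏ a ∈ Finset.range n, ∏ b ∈ Finset.range (L a), fpol β y a b := by
  rw [map_prod]
  have h1 : ∀ a, rename (⇑(Equiv.swap i0 (i0 + 1))) (∏ b ∈ Finset.range (L a), fpol β y a b)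
      = ∏ b ∈ Finset.range (L a), fpol β y (Equiv.swap i0 (i0 + 1) a) b := by
    intro a
    rw [map_prod]
    refine Finset.prod_congr rfl fun b _ => ?_
    unfold fpol
    rw [map_mul, rename_C, map_sub, rename_X, rename_C]
  rw [Finset.prod_congr rfl fun a _ => h1 a]
  have hswlt : ∀ a, a < n → Equiv.swap i0 (i0 + 1) a < n := by
    intro a ha
    rw [Equiv.swap_apply_def]
    split_ifs <;> omega
  have hswsw : ∀ a, Equiv.swap i0 (i0 + 1) (Equiv.swap i0 (i0 + 1) a) = a :=
    fun a => Equiv.swap_apply_self _ _ _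
  apply Finset.prod_nbij' (fun a => Equiv.swap i0 (i0 + 1) a) (fun a => Equiv.swap i0 (i0 + 1) a)
  · intro a ha
    exact Finset.mem_range.mpr (hswlt a (Finset.mem_range.mp ha))
  · intro a ha
    exact Finset.mem_range.mpr (hswlt a (Finset.mem_range.mp ha))
  · intro a _
    exact hswsw a
  · intro a _
    exact hswsw a
  · intro a _
    have hLsw : L (Equiv.swap i0 (i0 + 1) a) = L a := by
      rw [Equiv.swap_apply_def]
      split_ifs with h1' h2'
      · rw [h1', ← hL]
      · rw [h2', hL]
      · rfl
    rw [hLsw]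

lemma bracket_identity (β : K) (y : ℕ → K) (hy : ∀ j, 1 + β * y j ≠ 0) (i0 a : ℕ) :
    (1 + C β * X (i0 + 1)) * fpol β y i0 a - (1 + C β * X i0) * fpol β y (i0 + 1) a
      = X i0 - X (i0 + 1) := by
  unfold fpol
  have h1 : (1 + C β * X (i0 + 1)) * (C ((1 + β * y a)⁻¹) * (X i0 - C (y a)))
        - (1 + C β * X i0) * (C ((1 + β * y a)⁻¹) * (X (i0 + 1) - C (y a)))
      = (C ((1 + β * y a)⁻¹) * C (1 + β * y a)) * (X i0 - X (i0 + 1)) := by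
    rw [C_add, C_mul, C_1]
    ring
  rw [h1, ← C_mul, inv_mul_cancel₀ (hy a), C_1, one_mul]

variable (β : K) (G : (ℕ → K) → Equiv.Perm ℕ → MvPolynomial ℕ K)

set_option maxHeartbeats 1600000 in
lemma strip_step (hG : GrothFamily β G) (y : ℕ → K) (hy : ∀ j, 1 + β * y j ≠ 0)
    (n k p r : ℕ) (hk : k < n) (hr : r + 1 ≤ n - k - 1 - p)
    (U : Equiv.Perm ℕ) (hU : ∀ j, U j = pfF n k p r j)
    (hGU : G y U = Qpol β y n k p r) :
    (∀ j, (U * sTr (k + r)) j = pfF n k p (r + 1) j) ∧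
      G y (U * sTr (k + r)) = Qpol β y n k p (r + 1) := by
  have hin : k + r + 1 < n := by omega
  set a := n - k - 1 - p - (r + 1) with ha
  have hdesc : U (k + r + 1) < U (k + r) := by
    rw [hU, hU]
    unfold pfF
    split_ifs <;> omega
  have hrec := (hG y hy).2 U (k + r) hdesc
  have hsh1 : shpF n k p (r + 1) (k + r) = a := by
    unfold shpF
    split_ifs <;> omega
  have hsh2 : shpF n k p r (k + r) = a + 1 := by
    unfold shpF
    split_ifs <;> omega
  have hshL : shpF n k p (r + 1) (k + r) = shpF n k p (r + 1) (k + r + 1) := by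
    unfold shpF
    split_ifs <;> omega
  have hsho : ∀ i', i' ≠ k + r → shpF n k p r i' = shpF n k p (r + 1) i' := by
    intro i' hi'
    unfold shpF
    split_ifs <;> omega
  have hQF : Qpol β y n k p r = Qpol β y n k p (r + 1) * fpol β y (k + r) a := by
    unfold Qpol
    have hfac : ∀ i' ∈ Finset.range n, (∏ j ∈ Finset.range (shpF n k p r i'), fpol β y i' j)
        = (∏ j ∈ Finset.range (shpF n k p (r + 1) i'), fpol β y i' j) *
          (if i' = k + r then fpol β y (k + r) a else 1) := by
      intro i' _
      by_cases hi' : i' = k + r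
      · subst hi'
        rw [if_pos rfl, hsh2, hsh1, Finset.prod_range_succ]
      · rw [if_neg hi', hsho i' hi', mul_one]
    rw [Finset.prod_congr rfl hfac, Finset.prod_mul_distrib,
      Finset.prod_ite_eq' (Finset.range n) (k + r) (fun _ => fpol β y (k + r) a),
      if_pos (Finset.mem_range.mpr (by omega))]
  have hsym : rename (⇑(Equiv.swap (k + r) (k + r + 1))) (Qpol β y n k p (r + 1))
      = Qpol β y n k p (r + 1) :=
    rename_swap_Q β y n (fun i' => shpF n k p (r + 1) i') (k + r) hin hshL
  have hrenf : rename (⇑(Equiv.swap (k + r) (k + r + 1))) (fpol β y (k + r) a)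
      = fpol β y (k + r + 1) a := by
    unfold fpol
    rw [map_mul, rename_C, map_sub, rename_X, rename_C, Equiv.swap_apply_left]
  have hbra := bracket_identity β y hy (k + r) a
  constructor
  · intro j
    rcases eq_or_ne j (k + r) with rfl | hj1
    · rw [mul_sTr_left, hU]
      unfold pfF
      split_ifs <;> omega
    rcases eq_or_ne j (k + r + 1) with rfl | hj2
    · rw [mul_sTr_right, hU]
      unfold pfF
      split_ifs <;> omega
    · rw [mul_sTr_ne U _ j hj1 hj2, hU]
      unfold pfF
      split_ifs <;> omega
  · apply mul_left_cancel₀ (X_sub_X_ne_zero (R := K) (k + r) (k + r + 1) (by omega))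
    rw [hrec, hGU, hQF, map_mul, hsym, hrenf]
    calc (1 + C β * X (k + r + 1)) * (Qpol β y n k p (r + 1) * fpol β y (k + r) a)
          - (1 + C β * X (k + r)) * (Qpol β y n k p (r + 1) * fpol β y (k + r + 1) a)
        = Qpol β y n k p (r + 1) *
            ((1 + C β * X (k + r + 1)) * fpol β y (k + r) a
              - (1 + C β * X (k + r)) * fpol β y (k + r + 1) a) := by ring
      _ = (X (k + r) - X (k + r + 1)) * Qpol β y n k p (r + 1) := by rw [hbra]; ring

set_option maxHeartbeats 1600000 in
lemma G_u0 (hG : GrothFamily β G) (y : ℕ → K) (hy : ∀ j, 1 + β * y j ≠ 0)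
    (n k : ℕ) (hk : k ≤ n) (u₀ : Equiv.Perm ℕ)
    (hu₀ : ∀ j, u₀ j = if j < k then n - 1 - j else if j < n then j - k else j) :
    G y u₀ = ∏ i ∈ Finset.range k, ∏ j ∈ Finset.range (n - 1 - i), fpol β y i j := by
  rcases eq_or_lt_of_le hk with rfl | hkn
  · -- k = n : here u₀ is the longest element itself
    have hu : u₀ = revPerm k := by
      apply Equiv.ext
      intro j
      rw [hu₀ j, revPerm_apply]
      split_ifs <;> omega
    rw [hu, (hG y hy).1 k]
    rfl
  · -- k < n : run the peeling chain
    have hstep : ∀ p r, r + 1 ≤ n - k - 1 - p →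
        (∃ U : Equiv.Perm ℕ, (∀ j, U j = pfF n k p r j) ∧ G y U = Qpol β y n k p r) →
        ∃ U : Equiv.Perm ℕ, (∀ j, U j = pfF n k p (r + 1) j) ∧
          G y U = Qpol β y n k p (r + 1) := by
      rintro p r hr ⟨U, hU, hQ⟩
      obtain ⟨h1, h2⟩ := strip_step β G hG y hy n k p r hkn hr U hU hQ
      exact ⟨U * sTr (k + r), h1, h2⟩
    have main : ∀ p, p ≤ n - k - 1 → ∀ r, r ≤ n - k - 1 - p →
        ∃ U : Equiv.Perm ℕ, (∀ j, U j = pfF n k p r j) ∧ G y U = Qpol β y n k p r := by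
      intro p
      induction p with
      | zero =>
        intro _ r
        induction r with
        | zero =>
          intro _
          refine ⟨revPerm n, fun j => ?_, ?_⟩
          · rw [revPerm_apply]
            unfold pfF
            split_ifs <;> omega
          · rw [(hG y hy).1 n]
            unfold Qpol
            refine Finset.prod_congr rfl fun i hi => ?_
            rw [show shpF n k 0 0 i = n - 1 - i by
              unfold shpF
              have := Finset.mem_range.mp hi
              split_ifs <;> omega]
            rfl
        | succ r ihr =>
          intro hr
          exact hstep 0 r hr (ihr (by omega))
      | succ p ihp =>
        intro hp r
        induction r with
        | zero =>
          intro _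
          obtain ⟨U, hU, hQ⟩ := ihp (by omega) (n - k - 1 - p) le_rfl
          refine ⟨U, fun j => ?_, ?_⟩
          · rw [hU j]
            unfold pfF
            split_ifs <;> omega
          · rw [hQ]
            unfold Qpol
            refine Finset.prod_congr rfl fun i _ => ?_
            rw [show shpF n k p (n - k - 1 - p) i = shpF n k (p + 1) 0 i by
              unfold shpF
              split_ifs <;> omega]
        | succ r ihr =>
          intro hr
          exact hstep (p + 1) r hr (ihr (by omega))
    obtain ⟨U, hU, hQ⟩ := main (n - k - 1) le_rfl 0 (by omega)
    have hu : u₀ = U := by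
      apply Equiv.ext
      intro j
      rw [hu₀ j, hU j]
      unfold pfF
      split_ifs <;> omega
    rw [hu, hQ]
    unfold Qpol
    have hvan : ∀ i ∈ Finset.range n, i ∉ Finset.range k →
        (∏ j ∈ Finset.range (shpF n k (n - k - 1) 0 i), fpol β y i j) = 1 := by
      intro i _ hik
      rw [show shpF n k (n - k - 1) 0 i = 0 by
        unfold shpF
        have : ¬ i < k := fun hc => hik (Finset.mem_range.mpr hc)
        split_ifs <;> omega]
      rfl
    rw [← Finset.prod_subset (Finset.range_subset_range.mpr hk) hvan]
    refine Finset.prod_congr rfl fun i hi => ?_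
    rw [show shpF n k (n - k - 1) 0 i = n - 1 - i by
      unfold shpF
      have := Finset.mem_range.mp hi
      split_ifs <;> omega]

end ChainLemmas

set_option maxHeartbeats 1000000 in
/-- Proposition `Prop:initial` of the paper.  Let `u₀ ∈ S_n` be
given by `u₀(i) = n+1-i` for `i ≤ k` and `u₀(i) = i-k` for `k < i ≤ n` (1-based;
below in 0-based form).  Then for every `v ∈ S_n`,
`c_{u₀,v}^{id}(t,y) = ∏_{i=1}^{k} ∏_{j=1}^{n-i} (t_i ⊖ y_j)` if `v = id`, and
`c_{u₀,v}^{id}(t,y) = 0` otherwise. -/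
theorem initial_structure_constant
    {K : Type*} [Field K] (β : K)
    (G : (ℕ → K) → Equiv.Perm ℕ → MvPolynomial ℕ K)
    (c : (ℕ → K) → (ℕ → K) → Equiv.Perm ℕ → Equiv.Perm ℕ → Equiv.Perm ℕ → K)
    (hG : GrothFamily β G) (hc : StructConsts β G c)
    (n k : ℕ) (hk : k ≤ n)
    (u₀ : Equiv.Perm ℕ)
    (hu₀ : ∀ j, u₀ j = if j < k then n - 1 - j else if j < n then j - k else j)
    (v : Equiv.Perm ℕ) (hv : InSn n v)
    (t y : ℕ → K)
    (ht : ∀ j, 1 + β * t j ≠ 0) (hy : ∀ j, 1 + β * y j ≠ 0) :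
    (v = 1 → c t y u₀ v 1 =
      ∏ i ∈ Finset.range k, ∏ j ∈ Finset.range (n - 1 - i), ominus β (t i) (y j)) ∧
    (v ≠ 1 → c t y u₀ v 1 = 0) := by
  have hGyu : G y u₀ = ∏ i ∈ Finset.range k, ∏ j ∈ Finset.range (n - 1 - i), fpol β y i j :=
    G_u0 β G hG y hy n k hk u₀ hu₀
  have hu₀fin : FinPerm u₀ := ⟨n, fun j hj => by rw [hu₀ j]; split_ifs <;> omega⟩
  have hvfin : FinPerm v := ⟨n, hv⟩
  obtain ⟨hfin, hnfin, hsum⟩ := hc t y ht hy u₀ v hu₀fin hvfin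
  have hsupp : (Function.support fun w => C (c t y u₀ v w) * G t w).Finite := by
    apply Set.Finite.subset hfin
    intro w hw
    simp only [Function.mem_support] at hw
    simp only [Set.mem_setOf_eq]
    intro hc0
    apply hw
    rw [hc0, map_zero, zero_mul]
  have heval := congrArg (eval t) hsum
  rw [map_mul] at heval
  have hmapped : (eval t) (∑ᶠ w : Equiv.Perm ℕ, C (c t y u₀ v w) * G t w)
      = ∑ᶠ w : Equiv.Perm ℕ, (eval t) (C (c t y u₀ v w) * G t w) :=
    AddMonoidHom.map_finsum ((eval t : MvPolynomial ℕ K →+* K).toAddMonoidHom) hsupp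
  rw [hmapped] at heval
  have hterm : ∀ w : Equiv.Perm ℕ, w ≠ 1 → (eval t) (C (c t y u₀ v w) * G t w) = 0 := by
    intro w hw1
    by_cases hwf : FinPerm w
    · obtain ⟨N, hN⟩ := hwf
      rw [map_mul, eval_C, eval_vanish β G hG t ht N w hN hw1, mul_zero]
    · rw [map_mul, eval_C, hnfin w hwf, zero_mul]
  have hsum1 : (∑ᶠ w : Equiv.Perm ℕ, (eval t) (C (c t y u₀ v w) * G t w)) = c t y u₀ v 1 := by
    rw [finsum_eq_single _ 1 hterm, G_one β G hG t ht, mul_one, eval_C]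
  rw [hsum1] at heval
  have hEu : (eval t) (G y u₀)
      = ∏ i ∈ Finset.range k, ∏ j ∈ Finset.range (n - 1 - i), ominus β (t i) (y j) := by
    rw [hGyu, map_prod]
    refine Finset.prod_congr rfl fun i _ => ?_
    rw [map_prod]
    refine Finset.prod_congr rfl fun j _ => ?_
    unfold fpol ominus
    rw [map_mul, eval_C, map_sub, eval_X, eval_C, div_eq_mul_inv, mul_comm]
  constructor
  · rintro rfl
    rw [G_one β G hG t ht, map_one, mul_one, hEu] at heval
    exact heval.symm
  · intro hv1
    rw [eval_vanish β G hG t ht n v hv hv1, mul_zero] at heval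
    exact heval.symm
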